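/- If a lens satisfies both the PutInjectivity law (∀ s ∈ S, ∀ v v' ∈ V, Put(s, v) = Put(s, v') implies v = v') and the WeakPutGet law (∀ s ∈ S, ∀ v ∈ V, Put(s, Get(Put(s, v))) = Put(s, v)), then it satisfies the PutGet law (∀ s ∈ S, ∀ v ∈ V, Get(Put(s, v)) = v). -/
import Mathlib


/-- PutInjectivity and WeakPutGet imply PutGet. -/
theorem putInjectivity_weakPutGet_implies_putGet {S V : Type*} (Get : S → V) (Put : S → V → S)
    (hPI : ∀ s : S, ∀ v v' : V, Put s v = Put s v' → v = v')
    (hWPG : ∀ s : S, ∀ v : V, Put s (Get (Put s v)) = Put s v) :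
    ∀ s : S, ∀ v : V, Get (Put s v) = v := by
  exact fun s v => hPI s _ v (hWPG s v)
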